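/- Let G be a DAG and P a partition of its vertex set such that the quotient graph G/P is acyclic. Then each part of P is an interval (a set of consecutive elements) in some topological ordering of G. -/

import Mathlib

/-- If the quotient of a DAG by a partition is acyclic, then each part of the
partition is an interval in some topological ordering of the DAG. -/
theorem stmt1 {V ι : Type} [Fintype V] [DecidableEq V] (E : V → V → Prop) (P : V → ι)
    (hacyc : ∀ v, ¬ Relation.TransGen E v v)
    (hQacyc : ∀ i : ι,
      ¬ Relation.TransGen (fun a b : ι => a ≠ b ∧ ∃ u v, E u v ∧ P u = a ∧ P v = b) i i) :
    ∃ ord : V ≃ Fin (Fintype.card V),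
      (∀ u v, E u v → ord u < ord v) ∧
      (∀ u v w, P u = P w → ord u ≤ ord v → ord v ≤ ord w → P v = P u) := by
  classical
  -- quotient strict order
  set Q : ι → ι → Prop :=
    Relation.TransGen (fun a b : ι => a ≠ b ∧ ∃ u v, E u v ∧ P u = a ∧ P v = b) with hQ
  -- reflexive closures as partial orders
  let rι : ι → ι → Prop := fun a b => a = b ∨ Q a b
  have hrι : IsPartialOrder ι rι :=
    { refl := fun a => Or.inl rfl
      trans := by
        rintro a b c (rfl | h) (rfl | h') <;>
          first
            | exact Or.inl rfl
            | exact Or.inr h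
            | exact Or.inr h'
            | exact Or.inr (h.trans h')
      antisymm := by
        rintro a b (rfl | h) hb
        · rfl
        rcases hb with rfl | h'
        · rfl
        · exact absurd (h.trans h') (hQacyc a) }
  let rV : V → V → Prop := fun a b => a = b ∨ Relation.TransGen E a b
  have hrV : IsPartialOrder V rV :=
    { refl := fun a => Or.inl rfl
      trans := by
        rintro a b c (rfl | h) (rfl | h') <;>
          first
            | exact Or.inl rfl
            | exact Or.inr h
            | exact Or.inr h'
            | exact Or.inr (h.trans h')
      antisymm := by
        rintro a b (rfl | h) hb
        · rfl
        rcases hb with rfl | h'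
        · rfl
        · exact absurd (h.trans h') (hacyc a) }
  obtain ⟨sι, hsιlin, hsιle⟩ := @extend_partialOrder ι rι hrι
  obtain ⟨sV, hsVlin, hsVle⟩ := @extend_partialOrder V rV hrV
  haveI := hsιlin
  haveI := hsVlin
  -- lexicographic strict order on V
  let Rs : V → V → Prop := fun u v =>
    (P u ≠ P v ∧ sι (P u) (P v)) ∨ (P u = P v ∧ u ≠ v ∧ sV u v)
  have hRtot : IsStrictTotalOrder V Rs :=
    { trichotomous := by
        intro a b hn1 hn2
        by_cases hab : a = b
        · exact hab
        by_cases hP : P a = P b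
        · rcases hsVlin.total a b with h | h
          · exact (hn1 (Or.inr ⟨hP, hab, h⟩)).elim
          · exact (hn2 (Or.inr ⟨hP.symm, Ne.symm hab, h⟩)).elim
        · rcases hsιlin.total (P a) (P b) with h | h
          · exact (hn1 (Or.inl ⟨hP, h⟩)).elim
          · exact (hn2 (Or.inl ⟨Ne.symm hP, h⟩)).elim
      irrefl := by
        rintro a (⟨h, _⟩ | ⟨_, h, _⟩) <;> exact h rfl
      trans := by
        rintro a b c (⟨hne, h⟩ | ⟨hP, hne, h⟩) (⟨hne', h'⟩ | ⟨hP', hne', h'⟩)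
        · by_cases hac : P a = P c
          · exact absurd (hsιlin.toIsPartialOrder.antisymm _ _ h' (hac ▸ h)) hne'
          · exact Or.inl ⟨hac, hsιlin.trans _ _ _ h h'⟩
        · exact Or.inl ⟨hP' ▸ hne, hP' ▸ h⟩
        · exact Or.inl ⟨hP ▸ hne', hP ▸ h'⟩
        · refine Or.inr ⟨hP.trans hP', ?_, hsVlin.trans _ _ _ h h'⟩
          rintro rfl
          exact hne (hsVlin.toIsPartialOrder.antisymm _ _ h h' ▸ rfl) }
  haveI := hRtot
  letI : LinearOrder V := linearOrderOfSTO Rs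
  have hlt : ∀ a b : V, a < b ↔ Rs a b := fun a b => Iff.rfl
  let e := monoEquivOfFin V rfl
  refine ⟨e.symm.toEquiv, ?_, ?_⟩
  · intro u v huv
    have : Rs u v := by
      by_cases hP : P u = P v
      · have ht : Relation.TransGen E u v := Relation.TransGen.single huv
        have hne : u ≠ v := by rintro rfl; exact hacyc u ht
        exact Or.inr ⟨hP, hne, hsVle _ _ (Or.inr ht)⟩
      · exact Or.inl ⟨hP, hsιle _ _ (Or.inr (Relation.TransGen.single
          ⟨hP, u, v, huv, rfl, rfl⟩))⟩
    exact e.symm.lt_iff_lt.mpr ((hlt u v).mpr this)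
  · intro u v w hPuw h1 h2
    by_contra hPv
    have hu : u ≠ v := by rintro rfl; exact hPv rfl
    have hw : v ≠ w := by rintro rfl; exact hPv hPuw.symm
    have h1' : Rs u v := (hlt u v).mp (e.symm.lt_iff_lt.mp
      (lt_of_le_of_ne h1 (fun h => hu (e.symm.toEquiv.injective h))))
    have h2' : Rs v w := (hlt v w).mp (e.symm.lt_iff_lt.mp
      (lt_of_le_of_ne h2 (fun h => hw (e.symm.toEquiv.injective h))))
    have s1 : sι (P u) (P v) := by
      rcases h1' with ⟨_, h⟩ | ⟨h, _⟩
      · exact h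
      · exact absurd h.symm hPv
    have s2 : sι (P v) (P u) := by
      rcases h2' with ⟨_, h⟩ | ⟨h, _⟩
      · exact hPuw ▸ h
      · exact absurd (h.trans hPuw.symm) hPv
    exact hPv (hsιlin.toIsPartialOrder.antisymm _ _ s2 s1)
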